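/- There exist k₀ ∈ ℕ and a sequence of positive real numbers (μ_k)_{k≥k₀} such that for every integer k ≥ k₀, k⁴π⁴ − (μ_k² − μ_k)·k²π² + μ_k − μ_k³ = 0, and lim_{k→∞} k²·(μ_k − kπ) = 1/(2π²); that is, μ_k = kπ + 1/(2π²k²) + o(1/k²) as k → ∞. -/
import Mathlib


open Real Filter


noncomputable def Pk (x μ : ℝ) : ℝ := x^4*π^4 - (μ^2 - μ)*x^2*π^2 + (μ - μ^3)

lemma pi_sq_gt : (9:ℝ) < π^2 := by nlinarith [Real.pi_gt_d6]
lemma pi_sq_lt : π^2 < (10:ℝ) := by nlinarith [Real.pi_lt_d2, Real.pi_pos]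

lemma Pk_lower (x : ℝ) (hx : 5 ≤ x) :
    0 < Pk x (x*π + (1/(2*π^2) - 1/x)/x^2) := by
  have hx0 : (0:ℝ) < x := by linarith
  have hπ0 : (0:ℝ) < π := Real.pi_pos
  have h9 := pi_sq_gt
  have h10 := pi_sq_lt
  set c : ℝ := 1/(2*π^2) - 1/x with hc
  have hcu : c ≤ 1 := by
    have h1 : 1/(2*π^2) ≤ 1/18 := by
      apply one_div_le_one_div_of_le <;> nlinarith
    have h2 : 0 < 1/x := by positivity
    simp only [hc]; linarith
  have hcl : -1 ≤ c := by
    have h1 : 0 < 1/(2*π^2) := by positivity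
    have h2 : 1/x ≤ 1/5 := by
      apply one_div_le_one_div_of_le <;> linarith
    simp only [hc]; linarith
  have hid : Pk x (x*π + c/x^2)
      = 2*π^3 - 1 + 2*π^2/x + c/x^2 - π^2*c^2/x^2 - 3*π*c^2/x^3 - c^3/x^6 := by
    simp only [hc, Pk]
    field_simp
    ring
  rw [hid]
  have hx2 : (25:ℝ) ≤ x^2 := by nlinarith
  have hx3 : (125:ℝ) ≤ x^3 := by nlinarith
  have hx6 : (15625:ℝ) ≤ x^6 := by nlinarith
  have b1 : -1/25 ≤ c/x^2 := by
    rw [div_le_div_iff₀ (by norm_num) (by positivity)]; nlinarith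
  have b2 : π^2*c^2/x^2 ≤ 10/25 := by
    rw [div_le_div_iff₀ (by positivity) (by norm_num)]; nlinarith [sq_nonneg c]
  have b3 : 3*π*c^2/x^3 ≤ 12/125 := by
    rw [div_le_div_iff₀ (by positivity) (by norm_num)]
    nlinarith [sq_nonneg c, Real.pi_lt_d2]
  have b4 : c^3/x^6 ≤ 1/15625 := by
    rw [div_le_div_iff₀ (by positivity) (by norm_num)]
    nlinarith [sq_nonneg c, sq_nonneg (c-1), sq_nonneg (c+1)]
  have b5 : 0 < 2*π^2/x := by positivity
  nlinarith [Real.pi_gt_d6]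

lemma Pk_upper (x : ℝ) (hx : 5 ≤ x) :
    Pk x (x*π + (1/(2*π^2) + 1/x)/x^2) < 0 := by
  have hx0 : (0:ℝ) < x := by linarith
  have hπ0 : (0:ℝ) < π := Real.pi_pos
  have h9 := pi_sq_gt
  have h10 := pi_sq_lt
  set c : ℝ := 1/(2*π^2) + 1/x with hc
  have hcu : c ≤ 1 := by
    have h1 : 1/(2*π^2) ≤ 1/18 := by
      apply one_div_le_one_div_of_le <;> nlinarith
    have h2 : 1/x ≤ 1/5 := by
      apply one_div_le_one_div_of_le <;> linarith
    simp only [hc]; linarith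
  have hcl : 0 ≤ c := by
    have h1 : 0 < 1/(2*π^2) := by positivity
    have h2 : 0 < 1/x := by positivity
    simp only [hc]; linarith
  have hid : Pk x (x*π + c/x^2)
      = -(2*π^3) - 1 - 2*π^2/x + c/x^2 - π^2*c^2/x^2 - 3*π*c^2/x^3 - c^3/x^6 := by
    simp only [hc, Pk]
    field_simp
    ring
  rw [hid]
  have hx2 : (25:ℝ) ≤ x^2 := by nlinarith
  have b1 : c/x^2 ≤ 1/25 := by
    rw [div_le_div_iff₀ (by positivity) (by norm_num)]; nlinarith
  have b2 : 0 ≤ π^2*c^2/x^2 := by positivity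
  have b3 : 0 ≤ 3*π*c^2/x^3 := by positivity
  have b4 : 0 ≤ c^3/x^6 := by positivity
  have b5 : 0 < 2*π^2/x := by positivity
  nlinarith [Real.pi_gt_d6]

lemma exists_root (k : ℕ) (hk : 5 ≤ k) :
    ∃ μ : ℝ, (k:ℝ)*π + (1/(2*π^2) - 1/(k:ℝ))/(k:ℝ)^2 ≤ μ ∧
      μ ≤ (k:ℝ)*π + (1/(2*π^2) + 1/(k:ℝ))/(k:ℝ)^2 ∧ Pk (k:ℝ) μ = 0 := by
  have hx : (5:ℝ) ≤ (k:ℝ) := by exact_mod_cast hk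
  have hx0 : (0:ℝ) < (k:ℝ) := by linarith
  set a : ℝ := (k:ℝ)*π + (1/(2*π^2) - 1/(k:ℝ))/(k:ℝ)^2 with ha
  set b : ℝ := (k:ℝ)*π + (1/(2*π^2) + 1/(k:ℝ))/(k:ℝ)^2 with hb
  have hab : a ≤ b := by
    have h1 : 0 < 1/(k:ℝ) := by positivity
    have h2 : (0:ℝ) < (k:ℝ)^2 := by positivity
    have : (1/(2*π^2) - 1/(k:ℝ))/(k:ℝ)^2 ≤ (1/(2*π^2) + 1/(k:ℝ))/(k:ℝ)^2 := by
      gcongr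
      linarith
    rw [ha, hb]; linarith
  have hcont : ContinuousOn (fun μ => Pk (k:ℝ) μ) (Set.Icc a b) := by
    unfold Pk; fun_prop
  have h0 : (0:ℝ) ∈ Set.Icc (Pk (k:ℝ) b) (Pk (k:ℝ) a) := by
    constructor
    · exact le_of_lt (Pk_upper (k:ℝ) hx)
    · exact le_of_lt (Pk_lower (k:ℝ) hx)
  have := intermediate_value_Icc' hab hcont h0
  obtain ⟨μ, hμ, hμ0⟩ := this
  exact ⟨μ, hμ.1, hμ.2, hμ0⟩

/-- First branch of eigenvalues of the conservative wave–Schrödinger coupled operator: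
there are positive `μ_k` with `k⁴π⁴ − (μ_k² − μ_k)k²π² + μ_k − μ_k³ = 0` and
`μ_k = kπ + 1/(2π²k²) + o(1/k²)` as `k → ∞`. -/
theorem wave_schrodinger_first_branch :
    ∃ (k₀ : ℕ) (μ : ℕ → ℝ),
      (∀ k : ℕ, k₀ ≤ k →
        0 < μ k ∧
        (k : ℝ) ^ 4 * π ^ 4 - ((μ k) ^ 2 - μ k) * (k : ℝ) ^ 2 * π ^ 2
          + (μ k - (μ k) ^ 3) = 0) ∧
      Tendsto (fun k : ℕ => (k : ℝ) ^ 2 * (μ k - (k : ℝ) * π)) atTop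
        (nhds (1 / (2 * π ^ 2))) := by
  refine ⟨5, fun k => if h : 5 ≤ k then (exists_root k h).choose else 1, ?_, ?_⟩
  · intro k hk
    simp only [dif_pos hk]
    obtain ⟨h1, h2, h3⟩ := (exists_root k hk).choose_spec
    set μ := (exists_root k hk).choose
    have hx : (5:ℝ) ≤ (k:ℝ) := by exact_mod_cast hk
    have hπ0 : (0:ℝ) < π := Real.pi_pos
    have h9 := pi_sq_gt
    constructor
    · have hk2 : (25:ℝ) ≤ (k:ℝ)^2 := by nlinarith
      have hc : -(1:ℝ) ≤ 1/(2*π^2) - 1/(k:ℝ) := by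
        have : (0:ℝ) < 1/(2*π^2) := by positivity
        have : 1/(k:ℝ) ≤ 1/5 := by
          apply one_div_le_one_div_of_le <;> linarith
        linarith
      have : -(1:ℝ)/25 ≤ (1/(2*π^2) - 1/(k:ℝ))/(k:ℝ)^2 := by
        rw [div_le_div_iff₀ (by norm_num) (by positivity)]
        nlinarith
      nlinarith
    · have := h3
      unfold Pk at this
      linarith
  · apply tendsto_of_tendsto_of_tendsto_of_le_of_le'
      (g := fun k : ℕ => 1/(2*π^2) - 1/(k:ℝ)) (h := fun k : ℕ => 1/(2*π^2) + 1/(k:ℝ))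
    · have := tendsto_const_nhds (x := 1/(2*π^2)) (f := atTop (α := ℕ))
      have h0 : Tendsto (fun k : ℕ => 1/(k:ℝ)) atTop (nhds 0) :=
        tendsto_one_div_atTop_nhds_zero_nat
      simpa using this.sub h0
    · have := tendsto_const_nhds (x := 1/(2*π^2)) (f := atTop (α := ℕ))
      have h0 : Tendsto (fun k : ℕ => 1/(k:ℝ)) atTop (nhds 0) :=
        tendsto_one_div_atTop_nhds_zero_nat
      simpa using this.add h0
    · filter_upwards [eventually_ge_atTop 5] with k hk
      simp only [dif_pos hk]
      obtain ⟨h1, h2, h3⟩ := (exists_root k hk).choose_spec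
      set μ := (exists_root k hk).choose
      have hx : (5:ℝ) ≤ (k:ℝ) := by exact_mod_cast hk
      have hk2 : (0:ℝ) < (k:ℝ)^2 := by positivity
      have := (div_le_iff₀ hk2).mp (by linarith : (1/(2*π^2) - 1/(k:ℝ))/(k:ℝ)^2 ≤ μ - (k:ℝ)*π)
      nlinarith [this]
    · filter_upwards [eventually_ge_atTop 5] with k hk
      simp only [dif_pos hk]
      obtain ⟨h1, h2, h3⟩ := (exists_root k hk).choose_spec
      set μ := (exists_root k hk).choose
      have hx : (5:ℝ) ≤ (k:ℝ) := by exact_mod_cast hk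
      have hk2 : (0:ℝ) < (k:ℝ)^2 := by positivity
      have := (le_div_iff₀ hk2).mp (by linarith : μ - (k:ℝ)*π ≤ (1/(2*π^2) + 1/(k:ℝ))/(k:ℝ)^2)
      nlinarith [this]
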